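/- Let n ≥ 1 and let F : ℝⁿ → ℝ be twice continuously differentiable. Define λ : ℝ^{4n} → ℝⁿ by λ_j(x) := x_{4j−3}² + x_{4j−2}² + x_{4j−1}² + x_{4j}², and for a C¹ function g : ℝ^{4n} → ℝ define (V_i g)(x) := ∂g/∂x_i(x) − x_i Σ_{ℓ=1}^{4n} x_ℓ ∂g/∂x_ℓ(x), for 1 ≤ i ≤ 4n. Then for every x ∈ ℝ^{4n} with Σ_{i=1}^{4n} x_i² = 1, one has Σ_{i=1}^{4n} (V_i(V_i(F ∘ λ)))(x) = 4 Σ_{j=1}^n λ_j(x)(1 − λ_j(x)) ∂²F/∂λ_j²(λ(x)) − 4 Σ_{1≤j≠ℓ≤n} λ_j(x)λ_ℓ(x) ∂²F/∂λ_j∂λ_ℓ(λ(x)) + 4 Σ_{j=1}^n (2 − 2n λ_j(x)) ∂F/∂λ_j(λ(x)). -/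

import Mathlib

/-- Partial derivative `∂g/∂x_i` of a function `g : ℝᵐ → ℝ`. -/
noncomputable def pd {m : ℕ} (i : Fin m) (g : (Fin m → ℝ) → ℝ)
    (x : Fin m → ℝ) : ℝ :=
  fderiv ℝ g x (Pi.single i 1)

/-- The vector field `V_i = ∂/∂x_i - x_i Σ_ℓ x_ℓ ∂/∂x_ℓ`, the orthogonal
projection of `∂/∂x_i` onto the tangent space of the unit sphere. -/
noncomputable def sphereV {m : ℕ} (i : Fin m) (g : (Fin m → ℝ) → ℝ)
    (x : Fin m → ℝ) : ℝ :=
  pd i g x - x i * ∑ ℓ, x ℓ * pd ℓ g x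

/-- The squared-radial coordinates
`λ_j(x) = x_{4j-3}² + x_{4j-2}² + x_{4j-1}² + x_{4j}²` on `ℝ^{4n}`. -/
noncomputable def lamCoord (n : ℕ) (x : Fin (4 * n) → ℝ) : Fin n → ℝ :=
  fun j => ∑ a : Fin 4,
    (x ⟨4 * j.val + a.val, by have h1 := j.isLt; have h2 := a.isLt; omega⟩) ^ 2

namespace SLR

variable {n : ℕ}

def idx (n : ℕ) (j : Fin n) (a : Fin 4) : Fin (4 * n) :=
  ⟨4 * j.val + a.val, by have h1 := j.isLt; have h2 := a.isLt; omega⟩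

def blk (n : ℕ) (i : Fin (4 * n)) : Fin n :=
  ⟨i.val / 4, by have := i.isLt; omega⟩

lemma blk_idx (j : Fin n) (a : Fin 4) : blk n (idx n j a) = j := by
  have := a.isLt
  apply Fin.ext
  simp only [blk, idx]
  omega

lemma lamCoord_apply (x : Fin (4 * n) → ℝ) (j : Fin n) :
    lamCoord n x j = ∑ a : Fin 4, (x (idx n j a)) ^ 2 := rfl

def eqv (n : ℕ) : Fin n × Fin 4 ≃ Fin (4 * n) where
  toFun p := idx n p.1 p.2
  invFun i := (blk n i, ⟨i.val % 4, Nat.mod_lt _ (by norm_num)⟩)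
  left_inv := by
    rintro ⟨j, a⟩
    have := a.isLt
    simp only [idx, blk]
    ext <;> simp <;> omega
  right_inv := by
    intro i
    apply Fin.ext
    simp only [idx, blk]
    omega

lemma sum_regroup (φ : Fin (4 * n) → ℝ) :
    ∑ i, φ i = ∑ j : Fin n, ∑ a : Fin 4, φ (idx n j a) := by
  rw [← (eqv n).sum_comp φ, Fintype.sum_prod_type]
  rfl

lemma sum_sq_blk (x : Fin (4 * n) → ℝ) (ψ : Fin n → ℝ) :
    ∑ i, x i ^ 2 * ψ (blk n i) = ∑ j, lamCoord n x j * ψ j := by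
  rw [sum_regroup (fun i => x i ^ 2 * ψ (blk n i))]
  refine Finset.sum_congr rfl fun j _ => ?_
  simp only [blk_idx, lamCoord_apply, ← Finset.sum_mul]

lemma sum_blk (ψ : Fin n → ℝ) :
    ∑ i : Fin (4 * n), ψ (blk n i) = 4 * ∑ j, ψ j := by
  rw [sum_regroup (fun i => ψ (blk n i))]
  simp [blk_idx, Finset.sum_const, Finset.mul_sum]

lemma lam_hasFDerivAt (x : Fin (4 * n) → ℝ) :
    HasFDerivAt (lamCoord n)
      (ContinuousLinearMap.pi (R := ℝ) (φ := fun _ : Fin n => ℝ) fun j =>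
        ∑ a : Fin 4, (2 * x (idx n j a)) • ContinuousLinearMap.proj (R := ℝ) (idx n j a)) x := by
  rw [show lamCoord n = fun x (j : Fin n) => ∑ a : Fin 4, (x (idx n j a)) ^ 2 from rfl]
  rw [hasFDerivAt_pi]
  intro j
  apply HasFDerivAt.fun_sum
  intro a _
  have h := (ContinuousLinearMap.proj (R := ℝ)
      (φ := fun _ : Fin (4 * n) => ℝ) (idx n j a)).hasFDerivAt (x := x)
  have h2 := h.fun_mul h
  simp only [ContinuousLinearMap.proj_apply] at h2
  have heq : (fun y : Fin (4 * n) → ℝ => y (idx n j a) * y (idx n j a))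
      = fun y => (y (idx n j a)) ^ 2 := by funext y; ring
  rw [heq] at h2
  refine h2.congr_fderiv ?_
  rw [two_mul, add_smul]

lemma lam_differentiableAt (x : Fin (4 * n) → ℝ) :
    DifferentiableAt ℝ (lamCoord n) x := (lam_hasFDerivAt x).differentiableAt

lemma idx_blk (i : Fin (4 * n)) :
    idx n (blk n i) ⟨i.val % 4, Nat.mod_lt _ (by norm_num)⟩ = i := by
  apply Fin.ext; simp only [idx, blk]; omega

lemma pd_comp (Φ : (Fin n → ℝ) → ℝ) (i : Fin (4 * n)) (x : Fin (4 * n) → ℝ)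
    (hΦ : DifferentiableAt ℝ Φ (lamCoord n x)) :
    pd i (Φ ∘ lamCoord n) x = 2 * x i * pd (blk n i) Φ (lamCoord n x) := by
  unfold pd
  rw [fderiv_comp x hΦ (lam_differentiableAt x), (lam_hasFDerivAt x).fderiv]
  rw [ContinuousLinearMap.comp_apply]
  have key : (ContinuousLinearMap.pi (R := ℝ) (φ := fun _ : Fin n => ℝ) fun j =>
      ∑ a : Fin 4, (2 * x (idx n j a)) • ContinuousLinearMap.proj (R := ℝ) (idx n j a))
      ((Pi.single i 1 : Fin (4 * n) → ℝ)) = (2 * x i) • (Pi.single (blk n i) 1 : Fin n → ℝ) := by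
    funext j
    simp only [ContinuousLinearMap.pi_apply, ContinuousLinearMap.sum_apply,
      ContinuousLinearMap.smul_apply, ContinuousLinearMap.proj_apply, Pi.smul_apply,
      smul_eq_mul]
    by_cases hj : j = blk n i
    · subst hj
      rw [Pi.single_apply, if_pos rfl, mul_one]
      rw [Finset.sum_eq_single (⟨i.val % 4, Nat.mod_lt _ (by norm_num)⟩ : Fin 4)]
      · rw [idx_blk, Pi.single_apply, if_pos rfl, mul_one]
      · intro b _ hb
        rw [Pi.single_apply, if_neg, mul_zero]
        intro hc
        apply hb
        apply Fin.ext
        have := congrArg Fin.val hc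
        simp only [idx, blk] at this ⊢
        omega
      · intro h; exact absurd (Finset.mem_univ _) h
    · rw [Pi.single_apply, if_neg hj, mul_zero]
      apply Finset.sum_eq_zero
      intro a _
      rw [Pi.single_apply, if_neg, mul_zero]
      intro hc
      apply hj
      rw [← hc, blk_idx]
  rw [key, map_smul, smul_eq_mul]

lemma pd_mul {m : ℕ} (f g : (Fin m → ℝ) → ℝ) (i : Fin m) (x : Fin m → ℝ)
    (hf : DifferentiableAt ℝ f x) (hg : DifferentiableAt ℝ g x) :
    pd i (fun y => f y * g y) x = f x * pd i g x + g x * pd i f x := by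
  unfold pd
  rw [fderiv_fun_mul hf hg]
  simp [smul_eq_mul]

lemma pd_proj {m : ℕ} (k i : Fin m) (x : Fin m → ℝ) :
    pd i (fun y => y k) x = if i = k then 1 else 0 := by
  unfold pd
  have h : (fun y : Fin m → ℝ => y k)
      = ContinuousLinearMap.proj (R := ℝ) (φ := fun _ : Fin m => ℝ) k := rfl
  rw [h, ContinuousLinearMap.fderiv, ContinuousLinearMap.proj_apply, Pi.single_apply]
  simp [eq_comm]

lemma pd_sub {m : ℕ} (f g : (Fin m → ℝ) → ℝ) (i : Fin m) (x : Fin m → ℝ)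
    (hf : DifferentiableAt ℝ f x) (hg : DifferentiableAt ℝ g x) :
    pd i (fun y => f y - g y) x = pd i f x - pd i g x := by
  unfold pd
  rw [fderiv_fun_sub hf hg]
  simp

lemma pd_sum {m : ℕ} {ι : Type*} (u : Finset ι) (A : ι → (Fin m → ℝ) → ℝ)
    (i : Fin m) (x : Fin m → ℝ) (hA : ∀ k ∈ u, DifferentiableAt ℝ (A k) x) :
    pd i (fun y => ∑ k ∈ u, A k y) x = ∑ k ∈ u, pd i (A k) x := by
  unfold pd
  rw [fderiv_fun_sum hA]
  simp

lemma pd_const_mul {m : ℕ} (c : ℝ) (f : (Fin m → ℝ) → ℝ) (i : Fin m) (x : Fin m → ℝ)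
    (hf : DifferentiableAt ℝ f x) :
    pd i (fun y => c * f y) x = c * pd i f x := by
  unfold pd
  rw [fderiv_const_mul hf]
  simp

/-- `Φ_j(y) = ∂_j F(y) - Σ_k y_k ∂_k F(y)`. -/
noncomputable def Phi (F : (Fin n → ℝ) → ℝ) (j : Fin n) : (Fin n → ℝ) → ℝ :=
  fun y => pd j F y - ∑ k, y k * pd k F y

lemma diff_Phi (F : (Fin n → ℝ) → ℝ) (hpdD : ∀ k : Fin n, Differentiable ℝ (pd k F))
    (j : Fin n) : Differentiable ℝ (Phi F j) := by
  apply (hpdD j).sub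
  apply Differentiable.fun_sum
  intro k _
  exact (differentiable_pi.mp differentiable_id k).mul (hpdD k)

lemma pd_Phi (F : (Fin n → ℝ) → ℝ) (hpdD : ∀ k : Fin n, Differentiable ℝ (pd k F))
    (j m : Fin n) (y : Fin n → ℝ) :
    pd m (Phi F j) y = pd m (pd j F) y - (pd m F y + ∑ k, y k * pd m (pd k F) y) := by
  unfold Phi
  rw [pd_sub _ _ m y (hpdD j y) (by
    apply DifferentiableAt.fun_sum
    intro k _
    exact ((differentiable_pi.mp differentiable_id k) y).mul (hpdD k y))]
  congr 1
  rw [pd_sum Finset.univ (fun k y => y k * pd k F y) m y (fun k _ =>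
    ((differentiable_pi.mp differentiable_id k) y).mul (hpdD k y))]
  have h : ∀ k : Fin n, pd m (fun y => y k * pd k F y) y
      = y k * pd m (pd k F) y + (if m = k then pd k F y else 0) := by
    intro k
    rw [pd_mul (fun y => y k) (pd k F) m y
      ((differentiable_pi.mp differentiable_id k) y) (hpdD k y), pd_proj]
    by_cases hmk : m = k <;> simp [hmk]
  rw [Finset.sum_congr rfl (fun k _ => h k), Finset.sum_add_distrib,
    Finset.sum_ite_eq Finset.univ m (fun k => pd k F y)]
  simp [add_comm]

lemma first_order (F : (Fin n → ℝ) → ℝ) (hF1 : Differentiable ℝ F) (i : Fin (4 * n)) :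
    sphereV i (F ∘ lamCoord n)
      = fun x' => 2 * x' i * Phi F (blk n i) (lamCoord n x') := by
  funext x'
  unfold sphereV
  have hc : ∀ ℓ : Fin (4 * n), pd ℓ (F ∘ lamCoord n) x'
      = 2 * x' ℓ * pd (blk n ℓ) F (lamCoord n x') :=
    fun ℓ => pd_comp F ℓ x' (hF1 _)
  rw [hc i]
  have hsum : (∑ ℓ, x' ℓ * pd ℓ (F ∘ lamCoord n) x')
      = ∑ k, lamCoord n x' k * (2 * pd k F (lamCoord n x')) := by
    rw [← sum_sq_blk x' (fun m => 2 * pd m F (lamCoord n x'))]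
    exact Finset.sum_congr rfl fun ℓ _ => by rw [hc ℓ]; ring
  rw [hsum]
  unfold Phi
  have h2 : (∑ k, lamCoord n x' k * (2 * pd k F (lamCoord n x')))
      = 2 * ∑ k, lamCoord n x' k * pd k F (lamCoord n x') := by
    rw [Finset.mul_sum]
    exact Finset.sum_congr rfl fun k _ => by ring
  rw [h2]
  ring

lemma pd_g (F : (Fin n → ℝ) → ℝ) (hpdD : ∀ k : Fin n, Differentiable ℝ (pd k F))
    (x : Fin (4 * n) → ℝ) (i ℓ : Fin (4 * n)) :
    pd ℓ (fun x' => 2 * x' i * Phi F (blk n i) (lamCoord n x')) x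
      = (2 * x i) * (2 * x ℓ * pd (blk n ℓ) (Phi F (blk n i)) (lamCoord n x))
        + Phi F (blk n i) (lamCoord n x) * (2 * (if ℓ = i then 1 else 0)) := by
  have hdf : DifferentiableAt ℝ (fun x' : Fin (4 * n) → ℝ => 2 * x' i) x :=
    ((differentiable_pi.mp differentiable_id i).const_mul 2) x
  have hdg : DifferentiableAt ℝ ((Phi F (blk n i)) ∘ lamCoord n) x :=
    ((diff_Phi F hpdD (blk n i)) (lamCoord n x)).comp x (lam_differentiableAt x)
  have h := pd_mul (fun x' => 2 * x' i) ((Phi F (blk n i)) ∘ lamCoord n) ℓ x hdf hdg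
  rw [show (fun x' => 2 * x' i * Phi F (blk n i) (lamCoord n x'))
      = (fun x' => (2 * x' i) * ((Phi F (blk n i)) ∘ lamCoord n) x') from rfl, h,
    pd_comp (Phi F (blk n i)) ℓ x ((diff_Phi F hpdD _) _),
    pd_const_mul 2 (fun y => y i) ℓ x (differentiable_pi.mp differentiable_id i x),
    pd_proj]
  rfl

lemma term_eval (F : (Fin n → ℝ) → ℝ) (hF1 : Differentiable ℝ F)
    (hpdD : ∀ k : Fin n, Differentiable ℝ (pd k F))
    (x : Fin (4 * n) → ℝ) (i : Fin (4 * n)) :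
    sphereV i (sphereV i (F ∘ lamCoord n)) x
      = x i ^ 2 * (4 * pd (blk n i) (Phi F (blk n i)) (lamCoord n x)
          - 4 * (∑ m, lamCoord n x m * pd m (Phi F (blk n i)) (lamCoord n x))
          - 2 * Phi F (blk n i) (lamCoord n x))
        + 2 * Phi F (blk n i) (lamCoord n x) := by
  rw [first_order F hF1 i]
  unfold sphereV
  have hinner : (∑ ℓ, x ℓ * pd ℓ (fun x' => 2 * x' i * Phi F (blk n i) (lamCoord n x')) x)
      = 4 * x i * (∑ m, lamCoord n x m * pd m (Phi F (blk n i)) (lamCoord n x))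
        + 2 * x i * Phi F (blk n i) (lamCoord n x) := by
    rw [Finset.sum_congr rfl fun ℓ (_ : ℓ ∈ Finset.univ) => by rw [pd_g F hpdD x i ℓ]]
    have split : ∀ ℓ : Fin (4 * n),
        x ℓ * ((2 * x i) * (2 * x ℓ * pd (blk n ℓ) (Phi F (blk n i)) (lamCoord n x))
          + Phi F (blk n i) (lamCoord n x) * (2 * (if ℓ = i then 1 else 0)))
        = x ℓ ^ 2 * ((fun m => 4 * x i * pd m (Phi F (blk n i)) (lamCoord n x)) (blk n ℓ))
          + (if ℓ = i then 2 * x ℓ * Phi F (blk n i) (lamCoord n x) else 0) := by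
      intro ℓ
      by_cases h : ℓ = i <;> simp only [h, if_pos, if_true, if_false, if_neg] <;> ring
    rw [Finset.sum_congr rfl fun ℓ _ => split ℓ, Finset.sum_add_distrib,
      sum_sq_blk x (fun m => 4 * x i * pd m (Phi F (blk n i)) (lamCoord n x)),
      Finset.sum_ite_eq' Finset.univ i (fun ℓ => 2 * x ℓ * Phi F (blk n i) (lamCoord n x))]
    rw [show (∑ m, lamCoord n x m * (fun m => 4 * x i * pd m (Phi F (blk n i)) (lamCoord n x)) m)
        = 4 * x i * ∑ m, lamCoord n x m * pd m (Phi F (blk n i)) (lamCoord n x) from by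
      rw [Finset.mul_sum]; exact Finset.sum_congr rfl fun m _ => by ring]
    simp
  rw [hinner, pd_g F hpdD x i i, if_pos rfl]
  ring

lemma alg (n : ℕ) (L U : Fin n → ℝ) (W : Fin n → Fin n → ℝ) (hL1 : ∑ j, L j = 1) :
    (∑ j, L j * (4 * (W j j - (U j + ∑ k, L k * W j k))
        - 4 * (∑ k, L k * (W k j - (U k + ∑ m, L m * W k m)))
        - 2 * (U j - ∑ k, L k * U k)))
      + 4 * (∑ j, 2 * (U j - ∑ k, L k * U k))
    = 4 * (∑ j, L j * (1 - L j) * W j j)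
      - 4 * (∑ j, ∑ ℓ, if j = ℓ then 0 else L j * L ℓ * W j ℓ)
      + 4 * (∑ j, (2 - 2 * (n : ℝ) * L j) * U j) := by
  classical
  set S : ℝ := ∑ k, L k * U k with hS
  set B : ℝ := ∑ j, ∑ k, L j * (L k * W j k) with hB
  have hLS : ∀ c : ℝ, (∑ j : Fin n, L j * c) = c := fun c => by
    rw [← Finset.sum_mul, hL1, one_mul]
  have hinner : ∀ j, (∑ k, L k * (W k j - (U k + ∑ m, L m * W k m)))
      = (∑ k, L k * W k j) - S - B := by
    intro j
    have e1 : ∀ k, L k * (W k j - (U k + ∑ m, L m * W k m))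
        = L k * W k j - L k * U k - (∑ m, L k * (L m * W k m)) := by
      intro k
      rw [show L k * (W k j - (U k + ∑ m, L m * W k m))
          = L k * W k j - L k * U k - L k * (∑ m, L m * W k m) from by ring,
        Finset.mul_sum]
    rw [Finset.sum_congr rfl fun k _ => e1 k, Finset.sum_sub_distrib,
      Finset.sum_sub_distrib, ← hS, ← hB]
  have hmain : (∑ j, L j * (4 * (W j j - (U j + ∑ k, L k * W j k))
        - 4 * (∑ k, L k * (W k j - (U k + ∑ m, L m * W k m)))
        - 2 * (U j - S)))
      = 4 * (∑ j, L j * W j j) - 4 * B := by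
    have e : ∀ j, L j * (4 * (W j j - (U j + ∑ k, L k * W j k))
        - 4 * (∑ k, L k * (W k j - (U k + ∑ m, L m * W k m)))
        - 2 * (U j - S))
        = 4 * (L j * W j j) - 4 * (L j * U j) - 4 * (L j * (∑ k, L k * W j k))
          - 4 * (L j * (∑ k, L k * W k j)) + 4 * (L j * S) + 4 * (L j * B)
          - 2 * (L j * U j) + 2 * (L j * S) := by
      intro j
      rw [hinner j]
      ring
    rw [Finset.sum_congr rfl fun j _ => e j]
    simp only [Finset.sum_add_distrib, Finset.sum_sub_distrib]
    have c1 : (∑ j, 4 * (L j * W j j)) = 4 * (∑ j, L j * W j j) :=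
      (Finset.mul_sum _ _ _).symm
    have c2 : (∑ j, 4 * (L j * U j)) = 4 * S := by rw [← Finset.mul_sum, ← hS]
    have c3 : (∑ j, 4 * (L j * (∑ k, L k * W j k))) = 4 * B := by
      rw [← Finset.mul_sum]
      congr 1
      rw [hB]
      exact Finset.sum_congr rfl fun j _ => Finset.mul_sum _ _ _
    have c4 : (∑ j, 4 * (L j * (∑ k, L k * W k j))) = 4 * B := by
      rw [← Finset.mul_sum]
      congr 1
      rw [Finset.sum_congr rfl fun j (_ : j ∈ Finset.univ) =>
        (Finset.mul_sum Finset.univ (fun k => L k * W k j) (L j)),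
        Finset.sum_comm, hB]
      exact Finset.sum_congr rfl fun k _ => Finset.sum_congr rfl fun j _ => by ring
    have c5 : (∑ j, 4 * (L j * S)) = 4 * S := by rw [← Finset.mul_sum, hLS S]
    have c6 : (∑ j, 4 * (L j * B)) = 4 * B := by rw [← Finset.mul_sum, hLS B]
    have c7 : (∑ j, 2 * (L j * U j)) = 2 * S := by rw [← Finset.mul_sum, ← hS]
    have c8 : (∑ j, 2 * (L j * S)) = 2 * S := by rw [← Finset.mul_sum, hLS S]
    rw [c1, c2, c3, c4, c5, c6, c7, c8]
    ring
  have hC2 : (∑ j, 2 * (U j - S)) = 2 * (∑ j, U j) - 2 * (n : ℝ) * S := by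
    rw [Finset.sum_congr rfl fun j (_ : j ∈ Finset.univ) => mul_sub 2 (U j) S,
      Finset.sum_sub_distrib, ← Finset.mul_sum, Finset.sum_const,
      Finset.card_univ, Fintype.card_fin, nsmul_eq_mul]
    ring
  have r1 : (∑ j, L j * (1 - L j) * W j j)
      = (∑ j, L j * W j j) - (∑ j, L j * (L j * W j j)) := by
    rw [← Finset.sum_sub_distrib]
    exact Finset.sum_congr rfl fun j _ => by ring
  have r2 : (∑ j, ∑ ℓ, if j = ℓ then 0 else L j * L ℓ * W j ℓ)
      = B - (∑ j, L j * (L j * W j j)) := by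
    rw [hB, ← Finset.sum_sub_distrib]
    refine Finset.sum_congr rfl fun j _ => ?_
    have e : ∀ ℓ, (if j = ℓ then 0 else L j * L ℓ * W j ℓ)
        = L j * (L ℓ * W j ℓ) - (if j = ℓ then L j * (L ℓ * W j ℓ) else 0) := by
      intro ℓ
      by_cases h : j = ℓ <;> simp [h] <;> ring
    rw [Finset.sum_congr rfl fun ℓ _ => e ℓ, Finset.sum_sub_distrib,
      Finset.sum_ite_eq Finset.univ j (fun ℓ => L j * (L ℓ * W j ℓ))]
    simp
  have r3 : (∑ j, (2 - 2 * (n : ℝ) * L j) * U j)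
      = 2 * (∑ j, U j) - 2 * (n : ℝ) * S := by
    rw [Finset.sum_congr rfl fun j (_ : j ∈ Finset.univ) =>
        (show (2 - 2 * (n : ℝ) * L j) * U j = 2 * U j - 2 * (n : ℝ) * (L j * U j) from by ring),
      Finset.sum_sub_distrib, ← Finset.mul_sum, ← Finset.mul_sum, ← hS]
  rw [hmain, hC2, r1, r2, r3]
  ring

end SLR

open SLR
theorem sphere_laplacian_radial (n : ℕ) (hn : 1 ≤ n)
    (F : (Fin n → ℝ) → ℝ) (hF : ContDiff ℝ 2 F)
    (x : Fin (4 * n) → ℝ) (hx : ∑ i, (x i) ^ 2 = 1) :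
    ∑ i, sphereV i (sphereV i (F ∘ lamCoord n)) x =
      4 * (∑ j, lamCoord n x j * (1 - lamCoord n x j) * pd j (pd j F) (lamCoord n x))
      - 4 * (∑ j, ∑ ℓ, if j = ℓ then 0 else
          lamCoord n x j * lamCoord n x ℓ * pd j (pd ℓ F) (lamCoord n x))
      + 4 * (∑ j, (2 - 2 * n * lamCoord n x j) * pd j F (lamCoord n x)) := by
  classical
  have hF1 : Differentiable ℝ F := hF.differentiable (by norm_num)
  have hpdD : ∀ k : Fin n, Differentiable ℝ (pd k F) := by
    intro k
    have h1 : ContDiff ℝ 1 (fderiv ℝ F) := hF.fderiv_right (by norm_num)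
    exact (h1.clm_apply contDiff_const).differentiable (by norm_num)
  have hL1 : (∑ j, lamCoord n x j) = 1 := by
    have h := sum_sq_blk x (fun _ => 1)
    simp only [mul_one] at h
    rw [← h, hx]
  rw [Finset.sum_congr rfl fun i (_ : i ∈ Finset.univ) => term_eval F hF1 hpdD x i,
    Finset.sum_add_distrib,
    show (∑ i, x i ^ 2 * (4 * pd (blk n i) (Phi F (blk n i)) (lamCoord n x)
        - 4 * (∑ m, lamCoord n x m * pd m (Phi F (blk n i)) (lamCoord n x))
        - 2 * Phi F (blk n i) (lamCoord n x)))
      = ∑ j, lamCoord n x j * (4 * pd j (Phi F j) (lamCoord n x)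
        - 4 * (∑ m, lamCoord n x m * pd m (Phi F j) (lamCoord n x))
        - 2 * Phi F j (lamCoord n x)) from
      sum_sq_blk x (fun m => 4 * pd m (Phi F m) (lamCoord n x)
        - 4 * (∑ k, lamCoord n x k * pd k (Phi F m) (lamCoord n x))
        - 2 * Phi F m (lamCoord n x)),
    show (∑ i, 2 * Phi F (blk n i) (lamCoord n x))
      = 4 * ∑ j, 2 * Phi F j (lamCoord n x) from
      sum_blk (fun m => 2 * Phi F m (lamCoord n x))]
  have halg := alg n (lamCoord n x) (fun j => pd j F (lamCoord n x))
    (fun m k => pd m (pd k F) (lamCoord n x)) hL1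
  refine Eq.trans ?_ halg
  show (∑ j, lamCoord n x j * (4 * pd j (Phi F j) (lamCoord n x)
      - 4 * (∑ m, lamCoord n x m * pd m (Phi F j) (lamCoord n x))
      - 2 * Phi F j (lamCoord n x)))
    + 4 * (∑ j, 2 * Phi F j (lamCoord n x))
    = (∑ j, lamCoord n x j * (4 * (pd j (pd j F) (lamCoord n x)
        - (pd j F (lamCoord n x) + ∑ k, lamCoord n x k * pd j (pd k F) (lamCoord n x)))
      - 4 * (∑ k, lamCoord n x k * (pd k (pd j F) (lamCoord n x)
        - (pd k F (lamCoord n x) + ∑ m, lamCoord n x m * pd k (pd m F) (lamCoord n x))))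
      - 2 * (pd j F (lamCoord n x) - ∑ k, lamCoord n x k * pd k F (lamCoord n x))))
      + 4 * (∑ j, 2 * (pd j F (lamCoord n x) - ∑ k, lamCoord n x k * pd k F (lamCoord n x)))
  congr 1
  · refine Finset.sum_congr rfl fun j _ => ?_
    have hk : (∑ m, lamCoord n x m * pd m (Phi F j) (lamCoord n x))
        = ∑ k, lamCoord n x k * (pd k (pd j F) (lamCoord n x)
            - (pd k F (lamCoord n x)
              + ∑ m, lamCoord n x m * pd k (pd m F) (lamCoord n x))) :=
      Finset.sum_congr rfl fun k _ => by rw [pd_Phi F hpdD j k (lamCoord n x)]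
    rw [hk, pd_Phi F hpdD j j (lamCoord n x)]
    simp only [Phi]
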